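/- For a Vahlen matrix A = [[a,b],[c,d]] and x, y ∈ V such that cx+d and cy+d are invertible, the Möbius transformation satisfies Ax - Ay = Δ(A)·(y c~ + d~)⁻¹ (x - y) (cx + d)⁻¹, where Δ(A) = a d~ - b c~ is the (real, nonzero) pseudo-determinant and Ax = (ax+b)(cx+d)⁻¹. -/
import Mathlib


open CliffordAlgebra

section helpers

variable {M : Type*} [AddCommGroup M] [Module ℝ M] {Q Qc : QuadraticForm ℝ M}

lemma my_contract_mul (φ : Module.Dual ℝ M) (a b : CliffordAlgebra Q) :
    contractLeft φ (a * b) =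
      contractLeft φ a * b + involute a * contractLeft φ b := by
  induction a using CliffordAlgebra.induction generalizing b with
  | algebraMap r =>
      rw [contractLeft_algebraMap_mul, contractLeft_algebraMap, zero_mul, zero_add,
        AlgHom.commutes]
  | ι v =>
      rw [contractLeft_ι_mul, contractLeft_ι, involute_ι, Algebra.smul_def, neg_mul,
        sub_eq_add_neg]
  | mul a₁ a₂ h₁ h₂ =>
      rw [mul_assoc, h₁, h₂, h₁, map_mul]
      noncomm_ring
  | add a₁ a₂ h₁ h₂ =>
      simp only [add_mul, map_add, h₁, h₂]
      abel

lemma my_twisted_eq_contract (v : M) (a : CliffordAlgebra Q) :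
    ι Q v * a - involute a * ι Q v = contractLeft (Q.polarBilin v) a := by
  induction a using CliffordAlgebra.induction with
  | algebraMap r => simp [Algebra.commutes]
  | ι w =>
      rw [involute_ι, contractLeft_ι]
      simp only [neg_mul, sub_neg_eq_add, ι_mul_ι_add_swap]
      rfl
  | mul a₁ a₂ h₁ h₂ =>
      rw [my_contract_mul, ← h₁, ← h₂, map_mul]
      noncomm_ring
  | add a₁ a₂ h₁ h₂ =>
      simp only [map_add, mul_add, add_mul, ← h₁, ← h₂]
      abel


local notation "Q0" => (0 : QuadraticForm ℝ M)

-- in the exterior algebra, vectors twisted-commute with everything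
lemma my_ext_anticomm (v : M) (p : CliffordAlgebra Q0) :
    ι Q0 v * p = involute p * ι Q0 v := by
  induction p using CliffordAlgebra.induction with
  | algebraMap r => rw [AlgHom.commutes, Algebra.commutes]
  | ι w =>
      rw [involute_ι, neg_mul, eq_neg_iff_add_eq_zero, ι_mul_ι_add_swap]
      simp [QuadraticMap.polar]
  | mul a₁ a₂ h₁ h₂ => rw [map_mul, ← mul_assoc, h₁, mul_assoc, h₂, mul_assoc]
  | add a₁ a₂ h₁ h₂ => rw [map_add, mul_add, add_mul, h₁, h₂]

lemma my_ext_anticomm' (v : M) (p : CliffordAlgebra Q0) :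
    p * ι Q0 v = ι Q0 v * involute p := by
  have h := my_ext_anticomm v (involute p)
  rw [involute_involute] at h
  exact h.symm

-- involute preserves adjoin of a set of vectors
lemma my_involute_adjoin {s : Set M} {p : CliffordAlgebra Q0}
    (hp : p ∈ Algebra.adjoin ℝ (ι Q0 '' s)) :
    involute p ∈ Algebra.adjoin ℝ (ι Q0 '' s) := by
  induction hp using Algebra.adjoin_induction with
  | mem x hx =>
      obtain ⟨m, hm, rfl⟩ := hx
      rw [involute_ι]
      exact neg_mem (Algebra.subset_adjoin ⟨m, hm, rfl⟩)
  | algebraMap r => rw [AlgHom.commutes]; exact Subalgebra.algebraMap_mem _ r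
  | add x y _ _ hx hy => rw [map_add]; exact add_mem hx hy
  | mul x y _ _ hx hy => rw [map_mul]; exact mul_mem hx hy

lemma my_exists_polar_eq (Q : QuadraticForm ℝ M)
    (hsep : ∀ w : M, (∀ u : M, QuadraticMap.polar Q w u = 0) → w = 0)
    {n : ℕ} (w : Fin n → M) (hw : LinearIndependent ℝ w) (t : Fin n → ℝ) :
    ∃ v : M, ∀ i, QuadraticMap.polar Q v (w i) = t i := by
  set μ : M →ₗ[ℝ] (Fin n → ℝ) :=
    { toFun := fun v i => QuadraticMap.polar Q v (w i)
      map_add' := fun x y => by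
        funext i; exact QuadraticMap.polar_add_left Q x y (w i)
      map_smul' := fun r x => by
        funext i; exact QuadraticMap.polar_smul_left Q r x (w i) } with hμ
  suffices hsurj : Function.Surjective μ by
    obtain ⟨v, hv⟩ := hsurj t
    exact ⟨v, fun i => congrFun hv i⟩
  rw [← LinearMap.range_eq_top]
  by_contra hne
  obtain ⟨f, hf0, hfbot⟩ :=
    Submodule.exists_dual_map_eq_bot_of_lt_top (lt_top_iff_ne_top.mpr hne) inferInstance
  have hker : ∀ v : M, f (μ v) = 0 := by
    intro v
    have hmem : f (μ v) ∈ (LinearMap.range μ).map f :=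
      Submodule.mem_map_of_mem (LinearMap.mem_range_self μ v)
    rw [hfbot] at hmem
    exact hmem
  set c : Fin n → ℝ := fun i => f (fun j => if i = j then 1 else 0) with hc
  have hzero : (∑ i, c i • w i) = 0 := by
    apply hsep
    intro u
    rw [QuadraticMap.polar_comm]
    have h1 : QuadraticMap.polar Q u (∑ i, c i • w i)
        = ∑ i, c i • QuadraticMap.polar Q u (w i) := by
      calc QuadraticMap.polar Q u (∑ i, c i • w i)
          = (Q.polarBilin u) (∑ i, c i • w i) := rfl
        _ = ∑ i, (Q.polarBilin u) (c i • w i) := map_sum _ _ _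
        _ = ∑ i, c i • QuadraticMap.polar Q u (w i) := by
            refine Finset.sum_congr rfl fun i _ => ?_
            rw [map_smul]
            rfl
    rw [h1]
    have h2 := hker u
    rw [LinearMap.pi_apply_eq_sum_univ f (μ u)] at h2
    simp only [hμ, LinearMap.coe_mk, AddHom.coe_mk, smul_eq_mul] at h2
    rw [← h2]
    refine Finset.sum_congr rfl fun i _ => ?_
    rw [smul_eq_mul, hc, mul_comm]
  have hc0 : ∀ i, c i = 0 := Fintype.linearIndependent_iff.mp hw c hzero
  apply hf0
  apply LinearMap.ext
  intro x
  rw [LinearMap.pi_apply_eq_sum_univ f x]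
  have : ∀ i : Fin n, f (fun j => if i = j then 1 else 0) = 0 := fun i => hc0 i
  simp only [LinearMap.zero_apply]
  rw [Finset.sum_eq_zero]
  intro i _
  rw [this i, smul_zero]

lemma my_contract_kill {Q : QuadraticForm ℝ M} (D : Module.Dual ℝ M) (s : Set M)
    (hD : ∀ m ∈ s, D m = 0) {p : CliffordAlgebra Q}
    (hp : p ∈ Algebra.adjoin ℝ (ι Q '' s)) :
    contractLeft D p = 0 := by
  induction hp using Algebra.adjoin_induction with
  | mem x hx =>
      obtain ⟨m, hm, rfl⟩ := hx
      rw [contractLeft_ι, hD m hm, map_zero]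
  | algebraMap r => rw [contractLeft_algebraMap]
  | add x y _ _ hx hy => rw [map_add, hx, hy, add_zero]
  | mul x y _ _ hx hy => rw [my_contract_mul, hx, hy, zero_mul, mul_zero, add_zero]

lemma my_fin_gen (Q : QuadraticForm ℝ M) (Z : CliffordAlgebra Q) :
    ∃ s : Finset M, Z ∈ Algebra.adjoin ℝ (ι Q '' ↑s) := by
  classical
  induction Z using CliffordAlgebra.induction with
  | algebraMap r => exact ⟨∅, Subalgebra.algebraMap_mem _ r⟩
  | ι v => exact ⟨{v}, Algebra.subset_adjoin ⟨v, by simp, rfl⟩⟩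
  | mul a₁ a₂ h₁ h₂ =>
      obtain ⟨s₁, hs₁⟩ := h₁; obtain ⟨s₂, hs₂⟩ := h₂
      refine ⟨s₁ ∪ s₂, mul_mem ?_ ?_⟩
      · exact Algebra.adjoin_mono (Set.image_mono (by simp)) hs₁
      · exact Algebra.adjoin_mono (Set.image_mono (by simp)) hs₂
  | add a₁ a₂ h₁ h₂ =>
      obtain ⟨s₁, hs₁⟩ := h₁; obtain ⟨s₂, hs₂⟩ := h₂
      refine ⟨s₁ ∪ s₂, add_mem ?_ ?_⟩
      · exact Algebra.adjoin_mono (Set.image_mono (by simp)) hs₁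
      · exact Algebra.adjoin_mono (Set.image_mono (by simp)) hs₂

lemma my_crux_fin (Q : QuadraticForm ℝ M)
    (hsep : ∀ w : M, (∀ u : M, QuadraticMap.polar Q w u = 0) → w = 0) :
    ∀ (m : ℕ) (w : Fin m → M), LinearIndependent ℝ w →
      ∀ Z : CliffordAlgebra (0 : QuadraticForm ℝ M),
        (∀ v : M, contractLeft (Q.polarBilin v) Z = 0) →
        Z ∈ Algebra.adjoin ℝ (ι (0 : QuadraticForm ℝ M) '' Set.range w) →
        ∃ r : ℝ, Z = algebraMap ℝ _ r := by
  intro m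
  induction m with
  | zero =>
      intro w _ Z _ hZ
      rw [Set.range_eq_empty, Set.image_empty, Algebra.adjoin_empty] at hZ
      obtain ⟨r, hr⟩ := Algebra.mem_bot.mp hZ
      exact ⟨r, hr.symm⟩
  | succ m ih =>
      intro w hw Z hZc hZ
      set w' : Fin m → M := w ∘ Fin.castSucc with hw'
      set u : CliffordAlgebra (0 : QuadraticForm ℝ M) := ι _ (w (Fin.last m)) with hu
      set A' := Algebra.adjoin ℝ (ι (0 : QuadraticForm ℝ M) '' Set.range w') with hA'
      have huu : u * u = 0 := by
        rw [hu, ι_sq_scalar]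
        simp
      -- the decomposition subalgebra
      set T : Subalgebra ℝ (CliffordAlgebra (0 : QuadraticForm ℝ M)) :=
        { carrier := {p | ∃ x ∈ A', ∃ y ∈ A', p = x + u * y}
          mul_mem' := by
            rintro p q ⟨x, hx, y, hy, rfl⟩ ⟨x', hx', y', hy', rfl⟩
            refine ⟨x * x', mul_mem hx hx',
              involute x * y' + y * x', add_mem (mul_mem (my_involute_adjoin hx) hy')
                (mul_mem hy hx'), ?_⟩
            have h1 : x * (u * y') = u * (involute x * y') := by
              rw [← mul_assoc, my_ext_anticomm' _ x, mul_assoc]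
            have h2 : u * y * (u * y') = 0 := by
              rw [mul_assoc, ← mul_assoc y u, my_ext_anticomm' _ y, ← mul_assoc,
                ← mul_assoc, huu, zero_mul, zero_mul]
            rw [add_mul, mul_add, mul_add, h1, h2, add_zero, mul_assoc u y x', mul_add]
            abel
          one_mem' := ⟨1, one_mem _, 0, zero_mem _, by rw [mul_zero, add_zero]⟩
          add_mem' := by
            rintro p q ⟨x, hx, y, hy, rfl⟩ ⟨x', hx', y', hy', rfl⟩
            exact ⟨x + x', add_mem hx hx', y + y', add_mem hy hy', by
              rw [mul_add]; abel⟩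
          zero_mem' := ⟨0, zero_mem _, 0, zero_mem _, by rw [mul_zero, add_zero]⟩
          algebraMap_mem' := fun r =>
            ⟨algebraMap ℝ _ r, Subalgebra.algebraMap_mem _ r, 0, zero_mem _, by
              rw [mul_zero, add_zero]⟩ } with hT
      have hZT : Z ∈ T := by
        refine Algebra.adjoin_le ?_ hZ
        rintro p ⟨mm, ⟨i, rfl⟩, rfl⟩
        induction i using Fin.lastCases with
        | last => exact ⟨0, zero_mem _, 1, one_mem _, by rw [mul_one, zero_add]⟩
        | cast j =>
            exact ⟨ι _ (w (Fin.castSucc j)), Algebra.subset_adjoin ⟨w (Fin.castSucc j),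
              ⟨j, rfl⟩, rfl⟩, 0, zero_mem _, by rw [mul_zero, add_zero]⟩
      obtain ⟨x, hx, y, hy, hZeq⟩ := hZT
      -- the dual functional
      obtain ⟨v₀, hv₀⟩ := my_exists_polar_eq Q hsep w hw
        (fun i => if i = Fin.last m then (1 : ℝ) else 0)
      have hD0 : ∀ mm ∈ Set.range w', (Q.polarBilin v₀) mm = 0 := by
        rintro mm ⟨j, rfl⟩
        have := hv₀ (Fin.castSucc j)
        rwa [if_neg (Fin.castSucc_lt_last j).ne] at this
      have hkx : contractLeft (Q.polarBilin v₀) x = 0 := my_contract_kill _ _ hD0 hx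
      have hky : contractLeft (Q.polarBilin v₀) y = 0 := my_contract_kill _ _ hD0 hy
      have hy0 : y = 0 := by
        have h0 := hZc v₀
        rw [hZeq, map_add, hkx, zero_add, my_contract_mul, hky, mul_zero, add_zero,
          contractLeft_ι] at h0
        rw [show ((QuadraticMap.polarBilin Q) v₀) (w (Fin.last m))
            = QuadraticMap.polar Q v₀ (w (Fin.last m)) from rfl,
          hv₀ (Fin.last m), if_pos rfl, map_one, one_mul] at h0
        exact h0
      rw [hy0, mul_zero, add_zero] at hZeq
      rw [hZeq] at hZc ⊢
      exact ih w' (hw.comp Fin.castSucc (Fin.castSucc_injective m)) x hZc hx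

lemma my_crux (Q : QuadraticForm ℝ M)
    (hsep : ∀ w : M, (∀ u : M, QuadraticMap.polar Q w u = 0) → w = 0)
    (z : CliffordAlgebra Q) (hz : ∀ v : M, ι Q v * z = involute z * ι Q v) :
    ∃ r : ℝ, z = algebraMap ℝ _ r := by
  letI : Invertible (2 : ℝ) := invertibleOfNonzero two_ne_zero
  have hcontr : ∀ v, contractLeft (Q.polarBilin v) z = 0 := fun v => by
    rw [← my_twisted_eq_contract, hz v, sub_self]
  set Z : CliffordAlgebra (0 : QuadraticForm ℝ M) := equivExterior Q z with hZ
  have hZc : ∀ v, contractLeft (Q.polarBilin v) Z = 0 := by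
    intro v
    rw [hZ, equivExterior, changeFormEquiv_apply, ← changeForm_contractLeft, hcontr v,
      map_zero]
  obtain ⟨sfin, hsfin⟩ := my_fin_gen (0 : QuadraticForm ℝ M) Z
  set W := Submodule.span ℝ (↑sfin : Set M) with hW
  haveI : FiniteDimensional ℝ W := FiniteDimensional.span_of_finite ℝ sfin.finite_toSet
  set bW := Module.finBasis ℝ W with hbW
  set w : Fin (Module.finrank ℝ W) → M := fun i => ((bW i : W) : M) with hwdef
  have hwli : LinearIndependent ℝ w :=
    bW.linearIndependent.map' W.subtype W.ker_subtype
  have hmem : Z ∈ Algebra.adjoin ℝ (ι (0 : QuadraticForm ℝ M) '' Set.range w) := by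
    refine Algebra.adjoin_le ?_ hsfin
    rintro p ⟨mm, hmm, rfl⟩
    have hmW : mm ∈ W := Submodule.subset_span hmm
    have hspan : mm ∈ Submodule.span ℝ (Set.range w) := by
      have h1 : (⟨mm, hmW⟩ : W) ∈ Submodule.span ℝ (Set.range bW) := by
        rw [bW.span_eq]; trivial
      have h2 := Submodule.mem_map_of_mem (f := W.subtype) h1
      rwa [Submodule.map_span, ← Set.range_comp] at h2
    have h3 : ι (0 : QuadraticForm ℝ M) mm ∈
        Submodule.span ℝ (ι (0 : QuadraticForm ℝ M) '' Set.range w) := by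
      rw [Submodule.span_image]
      exact Submodule.mem_map_of_mem hspan
    have h4 : Submodule.span ℝ (ι (0 : QuadraticForm ℝ M) '' Set.range w) ≤
        Subalgebra.toSubmodule (Algebra.adjoin ℝ (ι (0 : QuadraticForm ℝ M) '' Set.range w)) :=
      Submodule.span_le.mpr Algebra.subset_adjoin
    exact h4 h3
  obtain ⟨r, hr⟩ := my_crux_fin Q hsep _ w hwli Z hZc hmem
  refine ⟨r, (equivExterior Q).injective ?_⟩
  rw [← hZ, hr, equivExterior, changeFormEquiv_apply, changeForm_algebraMap]


/-- Clifford conjugation (reverse ∘ involute). -/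
noncomputable def myk (p : CliffordAlgebra Qc) : CliffordAlgebra Qc :=
  reverse (involute p)

lemma myk_mul (p q : CliffordAlgebra Qc) : myk (p * q) = myk q * myk p := by
  rw [myk, myk, myk, map_mul, reverse.map_mul]

lemma myk_add (p q : CliffordAlgebra Qc) : myk (p + q) = myk p + myk q := by
  rw [myk, myk, myk, map_add, map_add]

lemma myk_algebraMap (r : ℝ) :
    myk (algebraMap ℝ (CliffordAlgebra Qc) r) = algebraMap ℝ _ r := by
  rw [myk, AlgHom.commutes, reverse.commutes]

lemma myk_ι (v : M) : myk (ι Qc v) = -ι Qc v := by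
  rw [myk, involute_ι, map_neg, reverse_ι]

lemma myk_neg_ι (v : M) : myk (-ι Qc v) = ι Qc v := by
  rw [myk, map_neg, involute_ι, neg_neg, reverse_ι]

/-- matrix counterpart of `involute` under 1-1 periodicity -/
noncomputable def invMat (N : Matrix (Fin 2) (Fin 2) (CliffordAlgebra Qc)) :
    Matrix (Fin 2) (Fin 2) (CliffordAlgebra Qc) :=
  Matrix.of fun i j => if i = j then involute (N i j) else -involute (N i j)

/-- matrix counterpart of `reverse` under 1-1 periodicity -/
noncomputable def revMat (N : Matrix (Fin 2) (Fin 2) (CliffordAlgebra Qc)) :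
    Matrix (Fin 2) (Fin 2) (CliffordAlgebra Qc) :=
  Matrix.of fun i j => myk (N (j + 1) (i + 1))

lemma invMat_fin_two (a b c d : CliffordAlgebra Qc) :
    invMat !![a, b; c, d] = !![involute a, -involute b; -involute c, involute d] := by
  ext i j
  fin_cases i <;> fin_cases j <;> simp [invMat]

lemma revMat_fin_two (a b c d : CliffordAlgebra Qc) :
    revMat !![a, b; c, d] = !![myk d, myk b; myk c, myk a] := by
  ext i j
  fin_cases i <;> fin_cases j <;> simp [revMat]

lemma invMat_mul (N P : Matrix (Fin 2) (Fin 2) (CliffordAlgebra Qc)) :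
    invMat (N * P) = invMat N * invMat P := by
  ext i j
  rw [Matrix.mul_apply]
  simp only [invMat, Matrix.of_apply, Matrix.mul_apply]
  fin_cases i <;> fin_cases j <;>
    simp [Fin.sum_univ_two, map_add, map_mul, mul_neg, neg_mul, add_comm]
  all_goals abel

lemma revMat_mul (N P : Matrix (Fin 2) (Fin 2) (CliffordAlgebra Qc)) :
    revMat (N * P) = revMat P * revMat N := by
  ext i j
  rw [Matrix.mul_apply]
  simp only [revMat, Matrix.of_apply, Matrix.mul_apply]
  fin_cases i <;> fin_cases j <;>
    simp [Fin.sum_univ_two, myk_add, myk_mul, add_comm]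

lemma invMat_algebraMap (r : ℝ) :
    invMat (algebraMap ℝ (Matrix (Fin 2) (Fin 2) (CliffordAlgebra Qc)) r)
      = algebraMap ℝ _ r := by
  ext i j
  simp only [invMat, Matrix.of_apply, Matrix.algebraMap_matrix_apply]
  split_ifs with h <;> simp [AlgHom.commutes]

lemma revMat_algebraMap (r : ℝ) :
    revMat (algebraMap ℝ (Matrix (Fin 2) (Fin 2) (CliffordAlgebra Qc)) r)
      = algebraMap ℝ _ r := by
  ext i j
  simp only [revMat, Matrix.of_apply, Matrix.algebraMap_matrix_apply]
  fin_cases i <;> fin_cases j <;> simp [myk_algebraMap, myk]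

lemma invMat_add (N P : Matrix (Fin 2) (Fin 2) (CliffordAlgebra Qc)) :
    invMat (N + P) = invMat N + invMat P := by
  ext i j
  simp only [invMat, Matrix.of_apply, Matrix.add_apply, map_add]
  split_ifs <;> abel

lemma revMat_add (N P : Matrix (Fin 2) (Fin 2) (CliffordAlgebra Qc)) :
    revMat (N + P) = revMat N + revMat P := by
  ext i j
  simp [revMat, myk_add]

lemma myk_mul_involute {Qc : QuadraticForm ℝ M} (p q : CliffordAlgebra Qc) :
    myk p * involute q = involute (reverse p * q) := by
  rw [myk, reverse_involute, ← map_mul]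

lemma involute_mul_myk {Qc : QuadraticForm ℝ M} (p q : CliffordAlgebra Qc) :
    involute p * myk q = involute (p * reverse q) := by
  rw [myk, reverse_involute, ← map_mul]

section unitsH

lemma my_isUnit_reverse {p : CliffordAlgebra Qc} (h : IsUnit p) :
    IsUnit (reverse p) := by
  obtain ⟨u, rfl⟩ := h
  exact ⟨⟨reverse (u : CliffordAlgebra Qc), reverse ((u⁻¹ : _ˣ) : CliffordAlgebra Qc),
    by rw [← reverse.map_mul, Units.inv_mul, reverse.map_one],
    by rw [← reverse.map_mul, Units.mul_inv, reverse.map_one]⟩, rfl⟩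

lemma my_reverse_ringInverse {p : CliffordAlgebra Qc} (h : IsUnit p) :
    reverse (Ring.inverse p) = Ring.inverse (reverse p) := by
  have h1 : Ring.inverse p = ((h.unit⁻¹ : _ˣ) : CliffordAlgebra Qc) := by
    conv_lhs => rw [← h.unit_spec]
    rw [Ring.inverse_unit]
  set RU : (CliffordAlgebra Qc)ˣ :=
    ⟨reverse p, reverse ((h.unit⁻¹ : _ˣ) : CliffordAlgebra Qc),
      by rw [← reverse.map_mul, h.val_inv_mul, reverse.map_one],
      by rw [← reverse.map_mul, h.mul_val_inv, reverse.map_one]⟩ with hRU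
  have h2 : Ring.inverse (reverse p) = ((RU⁻¹ : _ˣ) : CliffordAlgebra Qc) := by
    rw [show reverse p = ((RU : _ˣ) : CliffordAlgebra Qc) from rfl, Ring.inverse_unit]
  rw [h2, h1]
  rfl

end unitsH

lemma final_calc (a b c d : CliffordAlgebra Qc) (r : ℝ)
    (hI : reverse d * a - reverse b * c = algebraMap ℝ _ r)
    (hIV : reverse a * d - reverse c * b = algebraMap ℝ _ r)
    (hIII : reverse c * a = reverse a * c)
    (hII : reverse b * d = reverse d * b)
    (x y : M) (hx : IsUnit (c * ι Qc x + d)) (hy : IsUnit (c * ι Qc y + d)) :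
    (a * ι Qc x + b) * Ring.inverse (c * ι Qc x + d) -
        (a * ι Qc y + b) * Ring.inverse (c * ι Qc y + d) =
      algebraMap ℝ _ r * Ring.inverse (ι Qc y * reverse c + reverse d) *
        (ι Qc x - ι Qc y) * Ring.inverse (c * ι Qc x + d) := by
  have hrv : reverse (c * ι Qc y + d) = ι Qc y * reverse c + reverse d := by
    rw [map_add, reverse.map_mul, reverse_ι]
  have hvr : IsUnit (ι Qc y * reverse c + reverse d) := hrv ▸ my_isUnit_reverse hy
  -- reverse-symmetry identity
  have e2 : (ι Qc y * reverse c + reverse d) * (a * ι Qc y + b)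
      = (ι Qc y * reverse a + reverse b) * (c * ι Qc y + d) := by
    have key2 : (ι Qc y * reverse c + reverse d) * (a * ι Qc y + b)
        - (ι Qc y * reverse a + reverse b) * (c * ι Qc y + d)
        = (ι Qc y * (reverse c * a) * ι Qc y - ι Qc y * (reverse a * c) * ι Qc y)
          + ((reverse d * a - reverse b * c) * ι Qc y
            - ι Qc y * (reverse a * d - reverse c * b))
          + (reverse d * b - reverse b * d) := by noncomm_ring
    rw [hIII, hI, hIV, ← hII, sub_self, sub_self, ← Algebra.commutes r (ι Qc y),
      sub_self, zero_add, add_zero] at key2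
    exact sub_eq_zero.mp key2
  -- the difference identity
  have e1 : (ι Qc y * reverse c + reverse d) * (a * ι Qc x + b)
      - (ι Qc y * reverse a + reverse b) * (c * ι Qc x + d)
      = algebraMap ℝ _ r * (ι Qc x - ι Qc y) := by
    have key1 : (ι Qc y * reverse c + reverse d) * (a * ι Qc x + b)
        - (ι Qc y * reverse a + reverse b) * (c * ι Qc x + d)
        = (ι Qc y * (reverse c * a) * ι Qc x - ι Qc y * (reverse a * c) * ι Qc x)
          + ((reverse d * a - reverse b * c) * ι Qc x
            - ι Qc y * (reverse a * d - reverse c * b))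
          + (reverse d * b - reverse b * d) := by noncomm_ring
    rw [hIII, hI, hIV, ← hII, sub_self, sub_self, ← Algebra.commutes r (ι Qc y),
      zero_add, add_zero, ← mul_sub] at key1
    exact key1
  have hD : (ι Qc y * reverse c + reverse d) *
      ((a * ι Qc x + b) * Ring.inverse (c * ι Qc x + d)
        - (a * ι Qc y + b) * Ring.inverse (c * ι Qc y + d)) * (c * ι Qc x + d)
      = algebraMap ℝ _ r * (ι Qc x - ι Qc y) := by
    calc (ι Qc y * reverse c + reverse d) *
        ((a * ι Qc x + b) * Ring.inverse (c * ι Qc x + d)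
          - (a * ι Qc y + b) * Ring.inverse (c * ι Qc y + d)) * (c * ι Qc x + d)
        = (ι Qc y * reverse c + reverse d) * (a * ι Qc x + b) *
            (Ring.inverse (c * ι Qc x + d) * (c * ι Qc x + d))
          - ((ι Qc y * reverse c + reverse d) * (a * ι Qc y + b)) *
              Ring.inverse (c * ι Qc y + d) * (c * ι Qc x + d) := by noncomm_ring
      _ = (ι Qc y * reverse c + reverse d) * (a * ι Qc x + b)
          - ((ι Qc y * reverse a + reverse b) * (c * ι Qc y + d)) *
              Ring.inverse (c * ι Qc y + d) * (c * ι Qc x + d) := by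
            rw [Ring.inverse_mul_cancel _ hx, mul_one, e2]
      _ = (ι Qc y * reverse c + reverse d) * (a * ι Qc x + b)
          - (ι Qc y * reverse a + reverse b) *
              ((c * ι Qc y + d) * Ring.inverse (c * ι Qc y + d)) * (c * ι Qc x + d) := by
            noncomm_ring
      _ = (ι Qc y * reverse c + reverse d) * (a * ι Qc x + b)
          - (ι Qc y * reverse a + reverse b) * (c * ι Qc x + d) := by
            rw [Ring.mul_inverse_cancel _ hy, mul_one]
      _ = algebraMap ℝ _ r * (ι Qc x - ι Qc y) := e1
  calc (a * ι Qc x + b) * Ring.inverse (c * ι Qc x + d)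
        - (a * ι Qc y + b) * Ring.inverse (c * ι Qc y + d)
      = (Ring.inverse (ι Qc y * reverse c + reverse d) * (ι Qc y * reverse c + reverse d))
          * ((a * ι Qc x + b) * Ring.inverse (c * ι Qc x + d)
            - (a * ι Qc y + b) * Ring.inverse (c * ι Qc y + d))
          * ((c * ι Qc x + d) * Ring.inverse (c * ι Qc x + d)) := by
        rw [Ring.inverse_mul_cancel _ hvr, Ring.mul_inverse_cancel _ hx, one_mul, mul_one]
    _ = Ring.inverse (ι Qc y * reverse c + reverse d) *
          ((ι Qc y * reverse c + reverse d) *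
            ((a * ι Qc x + b) * Ring.inverse (c * ι Qc x + d)
              - (a * ι Qc y + b) * Ring.inverse (c * ι Qc y + d)) * (c * ι Qc x + d)) *
          Ring.inverse (c * ι Qc x + d) := by noncomm_ring
    _ = Ring.inverse (ι Qc y * reverse c + reverse d) *
          (algebraMap ℝ _ r * (ι Qc x - ι Qc y)) * Ring.inverse (c * ι Qc x + d) := by
        rw [hD]
    _ = algebraMap ℝ _ r * Ring.inverse (ι Qc y * reverse c + reverse d) *
          (ι Qc x - ι Qc y) * Ring.inverse (c * ι Qc x + d) := by
        rw [← mul_assoc, ← Algebra.commutes r (Ring.inverse (ι Qc y * reverse c + reverse d))]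

end helpers


noncomputable def negQhat {V : Type*} [AddCommGroup V] [Module ℝ V]
    (Q : QuadraticForm ℝ V) : QuadraticForm ℝ (V × ℝ × ℝ) :=
  QuadraticMap.prod (-Q) (QuadraticMap.prod QuadraticMap.sq (-QuadraticMap.sq))

/-- The Clifford map `j : V ⊕ ℝ^{1,1} → Mat₂(Cl(V))` (convention `v² = -Q v`). -/
noncomputable def jmat {V : Type*} [AddCommGroup V] [Module ℝ V]
    (Q : QuadraticForm ℝ V) (x : V × ℝ × ℝ) :
    Matrix (Fin 2) (Fin 2) (CliffordAlgebra (-Q)) :=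
  !![ι (-Q) x.1, algebraMap ℝ _ (x.2.1 - x.2.2);
     algebraMap ℝ _ (x.2.1 + x.2.2), -ι (-Q) x.1]

/-- A Vahlen matrix: an element of `Mat₂(Cl(V))` corresponding, under the
`(1,1)`-periodicity isomorphism `F`, to an element of the Lipschitz group
`Γ(V ⊕ ℝ^{1,1})`, i.e. an invertible `g` with `g x ĝ⁻¹ ∈ V ⊕ ℝ^{1,1}` for all
`x ∈ V ⊕ ℝ^{1,1}`. -/
def IsVahlen {V : Type*} [AddCommGroup V] [Module ℝ V] (Q : QuadraticForm ℝ V)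
    (F : CliffordAlgebra (negQhat Q) ≃ₐ[ℝ] Matrix (Fin 2) (Fin 2) (CliffordAlgebra (-Q)))
    (A : Matrix (Fin 2) (Fin 2) (CliffordAlgebra (-Q))) : Prop :=
  IsUnit (F.symm A) ∧ ∀ x : V × ℝ × ℝ, ∃ y : V × ℝ × ℝ,
    F.symm A * ι (negQhat Q) x * Ring.inverse (involute (F.symm A)) = ι (negQhat Q) y

/-- The pseudo-determinant `Δ([[a,b],[c,d]]) = a d~ - b c~`. -/
noncomputable def pdet {V : Type*} [AddCommGroup V] [Module ℝ V] (Q : QuadraticForm ℝ V)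
    (A : Matrix (Fin 2) (Fin 2) (CliffordAlgebra (-Q))) : CliffordAlgebra (-Q) :=
  A 0 0 * reverse (A 1 1) - A 0 1 * reverse (A 1 0)


section sepQ
variable {V : Type*} [AddCommGroup V] [Module ℝ V]

lemma negQhat_apply (Q : QuadraticForm ℝ V) (p : V × ℝ × ℝ) :
    negQhat Q p = -(Q p.1) + (p.2.1 * p.2.1 - p.2.2 * p.2.2) := by
  simp [negQhat, QuadraticMap.prod_apply, QuadraticMap.sq_apply, sub_eq_add_neg]

lemma negQhat_sep (Q : QuadraticForm ℝ V)
    (hQnd : ∀ w : V, (∀ u : V, QuadraticMap.polar Q w u = 0) → w = 0) :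
    ∀ w : V × ℝ × ℝ, (∀ u : V × ℝ × ℝ, QuadraticMap.polar (negQhat Q) w u = 0) → w = 0 := by
  rintro ⟨w1, s, t⟩ H
  have h1 : w1 = 0 := by
    apply hQnd
    intro u
    have := H (u, 0, 0)
    simp only [QuadraticMap.polar, negQhat_apply, Prod.fst_add, Prod.snd_add,
      Prod.mk_add_mk, add_zero] at this
    simp only [QuadraticMap.polar]
    nlinarith [this]
  have h2 : s = 0 := by
    have := H (0, 1, 0)
    simp only [QuadraticMap.polar, negQhat_apply, Prod.fst_add, Prod.snd_add,
      Prod.mk_add_mk, add_zero, map_zero] at this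
    nlinarith [this]
  have h3 : t = 0 := by
    have := H (0, 0, 1)
    simp only [QuadraticMap.polar, negQhat_apply, Prod.fst_add, Prod.snd_add,
      Prod.mk_add_mk, add_zero, map_zero] at this
    nlinarith [this]
  simp [h1, h2, h3, Prod.ext_iff]
end sepQ


section transfer
variable {V : Type*} [AddCommGroup V] [Module ℝ V] (Q : QuadraticForm ℝ V)

lemma invMat_jmat (x : V × ℝ × ℝ) : invMat (jmat Q x) = -(jmat Q x) := by
  rw [jmat, invMat_fin_two]
  ext i j
  fin_cases i <;> fin_cases j <;> simp [AlgHom.commutes]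

lemma revMat_jmat (x : V × ℝ × ℝ) : revMat (jmat Q x) = jmat Q x := by
  rw [jmat, revMat_fin_two]
  ext i j
  fin_cases i <;> fin_cases j <;>
    simp [myk_ι, myk_neg_ι, ← map_sub, ← map_add, myk_algebraMap]

variable (F : CliffordAlgebra (negQhat Q) ≃ₐ[ℝ] Matrix (Fin 2) (Fin 2) (CliffordAlgebra (-Q)))
  (hF : ∀ x : V × ℝ × ℝ, F (ι (negQhat Q) x) = jmat Q x)

include hF

lemma F_involute (m : CliffordAlgebra (negQhat Q)) :
    F (involute m) = invMat (F m) := by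
  induction m using CliffordAlgebra.induction with
  | algebraMap r => simp only [AlgHom.commutes, AlgEquiv.commutes, invMat_algebraMap]
  | ι x => rw [involute_ι, map_neg, hF x, invMat_jmat]
  | mul m₁ m₂ h₁ h₂ => rw [map_mul, map_mul, h₁, h₂, map_mul, invMat_mul]
  | add m₁ m₂ h₁ h₂ => rw [map_add, map_add, h₁, h₂, map_add, invMat_add]

lemma F_reverse (m : CliffordAlgebra (negQhat Q)) :
    F (reverse m) = revMat (F m) := by
  induction m using CliffordAlgebra.induction with
  | algebraMap r => simp only [reverse.commutes, AlgEquiv.commutes, revMat_algebraMap]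
  | ι x => rw [reverse_ι, hF x, revMat_jmat]
  | mul m₁ m₂ h₁ h₂ => rw [reverse.map_mul, map_mul, h₁, h₂, map_mul, revMat_mul]
  | add m₁ m₂ h₁ h₂ => rw [map_add, map_add, h₁, h₂, map_add, revMat_add]

end transfer

/-- for a Vahlen matrix `A = [[a,b],[c,d]]` and `x, y ∈ V` with
`cx+d` and `cy+d` invertible,
`Ax - Ay = Δ(A) (y c~ + d~)⁻¹ (x - y) (cx + d)⁻¹`, where
`Az = (az+b)(cz+d)⁻¹` and `Δ(A) = a d~ - b c~`. -/
theorem vahlen_difference_formula (V : Type*) [AddCommGroup V] [Module ℝ V]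
    (Q : QuadraticForm ℝ V)
    (hQnd : ∀ w : V, (∀ u : V, QuadraticMap.polar Q w u = 0) → w = 0)
    (F : CliffordAlgebra (negQhat Q) ≃ₐ[ℝ] Matrix (Fin 2) (Fin 2) (CliffordAlgebra (-Q)))
    (hF : ∀ x : V × ℝ × ℝ, F (ι (negQhat Q) x) = jmat Q x)
    (a b c d : CliffordAlgebra (-Q)) (hA : IsVahlen Q F !![a, b; c, d])
    (x y : V) (hx : IsUnit (c * ι (-Q) x + d)) (hy : IsUnit (c * ι (-Q) y + d)) :
    (a * ι (-Q) x + b) * Ring.inverse (c * ι (-Q) x + d) -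
        (a * ι (-Q) y + b) * Ring.inverse (c * ι (-Q) y + d) =
      (a * reverse d - b * reverse c) *
        Ring.inverse (ι (-Q) y * reverse c + reverse d) *
        (ι (-Q) x - ι (-Q) y) * Ring.inverse (c * ι (-Q) x + d) := by
  classical
  set g := F.symm !![a, b; c, d] with hgdef
  have hg : IsUnit g := hA.1
  have hgi : IsUnit (involute g) := hg.map involute
  have hgr : IsUnit (reverse (involute g)) := my_isUnit_reverse hgi
  -- the twisted-centrality of z = reverse g * involute g
  have hcomm : ∀ xx : V × ℝ × ℝ,
      ι (negQhat Q) xx * (reverse g * involute g)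
        = involute (reverse g * involute g) * ι (negQhat Q) xx := by
    intro xx
    obtain ⟨yy, hyy⟩ := hA.2 xx
    rw [← hgdef] at hyy
    have h1 := congrArg reverse hyy
    rw [reverse.map_mul, reverse.map_mul, reverse_ι, reverse_ι,
      my_reverse_ringInverse hgi] at h1
    have h2 : Ring.inverse (reverse (involute g)) * (ι (negQhat Q) xx * reverse g)
        = g * ι (negQhat Q) xx * Ring.inverse (involute g) := h1.trans hyy.symm
    have h3 : ι (negQhat Q) xx * reverse g
        = reverse (involute g) * (g * ι (negQhat Q) xx * Ring.inverse (involute g)) := by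
      rw [← h2, show reverse (involute g) *
          (Ring.inverse (reverse (involute g)) * (ι (negQhat Q) xx * reverse g))
          = (reverse (involute g) * Ring.inverse (reverse (involute g)))
            * (ι (negQhat Q) xx * reverse g) from by noncomm_ring,
        Ring.mul_inverse_cancel _ hgr, one_mul]
    calc ι (negQhat Q) xx * (reverse g * involute g)
        = (ι (negQhat Q) xx * reverse g) * involute g := by rw [mul_assoc]
      _ = reverse (involute g) * (g * ι (negQhat Q) xx * Ring.inverse (involute g))
            * involute g := by rw [h3]
      _ = reverse (involute g) * (g * ι (negQhat Q) xx)
            * (Ring.inverse (involute g) * involute g) := by noncomm_ring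
      _ = reverse (involute g) * (g * ι (negQhat Q) xx) := by
            rw [Ring.inverse_mul_cancel _ hgi, mul_one]
      _ = involute (reverse g * involute g) * ι (negQhat Q) xx := by
            rw [map_mul, involute_involute, ← reverse_involute, mul_assoc]
  obtain ⟨r, hzr⟩ := my_crux (negQhat Q) (negQhat_sep Q hQnd)
    (reverse g * involute g) hcomm
  have hz2 : involute g * reverse g = algebraMap ℝ _ r := by
    have h5 : (involute g * reverse g) * involute g = algebraMap ℝ _ r * involute g := by
      rw [mul_assoc, hzr, Algebra.commutes]
    exact hgi.mul_right_cancel h5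
  have hFg : F g = !![a, b; c, d] := F.apply_symm_apply _
  have hM1 : revMat !![a, b; c, d] * invMat !![a, b; c, d] = algebraMap ℝ _ r := by
    rw [← hFg, ← F_reverse Q F hF g, ← F_involute Q F hF g, ← map_mul, hzr,
      AlgEquiv.commutes]
  have hM2 : invMat !![a, b; c, d] * revMat !![a, b; c, d] = algebraMap ℝ _ r := by
    rw [← hFg, ← F_involute Q F hF g, ← F_reverse Q F hF g, ← map_mul, hz2,
      AlgEquiv.commutes]
  rw [revMat_fin_two, invMat_fin_two, Matrix.mul_fin_two] at hM1 hM2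
  have hinj : Function.Injective (involute (Q := -Q)) := involute_involutive.injective
  have e00 : myk d * involute a + myk b * -involute c = algebraMap ℝ _ r := by
    have h := congrFun (congrFun hM1 0) 0
    simpa [Matrix.algebraMap_matrix_apply] using h
  have e01 : myk d * -involute b + myk b * involute d = 0 := by
    have h := congrFun (congrFun hM1 0) 1
    simpa [Matrix.algebraMap_matrix_apply] using h
  have e10 : myk c * involute a + myk a * -involute c = 0 := by
    have h := congrFun (congrFun hM1 1) 0
    simpa [Matrix.algebraMap_matrix_apply] using h
  have e11 : myk c * -involute b + myk a * involute d = algebraMap ℝ _ r := by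
    have h := congrFun (congrFun hM1 1) 1
    simpa [Matrix.algebraMap_matrix_apply] using h
  have f00 : involute a * myk d + -involute b * myk c = algebraMap ℝ _ r := by
    have h := congrFun (congrFun hM2 0) 0
    simpa [Matrix.algebraMap_matrix_apply] using h
  have hI : reverse d * a - reverse b * c = algebraMap ℝ _ r := by
    apply hinj
    rw [map_sub, ← myk_mul_involute, ← myk_mul_involute, AlgHom.commutes, ← e00]
    noncomm_ring
  have hII : reverse b * d = reverse d * b := by
    have h : involute (reverse b * d) - involute (reverse d * b) = 0 := by
      rw [← myk_mul_involute, ← myk_mul_involute, ← e01]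
      noncomm_ring
    have h2 := sub_eq_zero.mp h
    exact hinj h2
  have hIII : reverse c * a = reverse a * c := by
    have h : involute (reverse c * a) - involute (reverse a * c) = 0 := by
      rw [← myk_mul_involute, ← myk_mul_involute, ← e10]
      noncomm_ring
    exact hinj (sub_eq_zero.mp h)
  have hIV : reverse a * d - reverse c * b = algebraMap ℝ _ r := by
    apply hinj
    rw [map_sub, ← myk_mul_involute, ← myk_mul_involute, AlgHom.commutes, ← e11]
    noncomm_ring
  have hV : a * reverse d - b * reverse c = algebraMap ℝ _ r := by
    apply hinj
    rw [map_sub, ← involute_mul_myk, ← involute_mul_myk, AlgHom.commutes, ← f00]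
    noncomm_ring
  rw [hV]
  exact final_calc a b c d r hI hIV hIII hII x y hx hy
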